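/- Let X = ℝ^n, Ω ⊆ ℝ^n, and f_i : ℝ^n → ℝ locally Lipschitz at x̄ ∈ Ω. If x̄ is a local highly robust weakly efficient solution of (P_U), then there exist no d in the (weak) contingent cone T(x̄; Ω) and no u ∈ U such that ⟨x* − u_i, d⟩ < 0 for all x* ∈ ∂f_i(x̄) and all i ∈ I, where ∂f_i denotes the Mordukhovich (limiting) subdifferential. -/

import Mathlib

set_option maxHeartbeats 1600000


open Filter Topology

/-- Fréchet subdifferential of `f : ℝⁿ → ℝ` at `x`. -/
def frechetSubdiff {n : ℕ} (f : EuclideanSpace ℝ (Fin n) → ℝ)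
    (x : EuclideanSpace ℝ (Fin n)) : Set (EuclideanSpace ℝ (Fin n)) :=
  {v | ∀ ε > (0 : ℝ), ∀ᶠ y in 𝓝 x,
    -ε * ‖y - x‖ ≤ f y - f x - (inner ℝ v (y - x) : ℝ)}

/-- Mordukhovich (limiting) subdifferential of `f : ℝⁿ → ℝ` at `x`. -/
def limitingSubdiff {n : ℕ} (f : EuclideanSpace ℝ (Fin n) → ℝ)
    (x : EuclideanSpace ℝ (Fin n)) : Set (EuclideanSpace ℝ (Fin n)) :=
  {v | ∃ xs vs : ℕ → EuclideanSpace ℝ (Fin n),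
    (∀ k, vs k ∈ frechetSubdiff f (xs k)) ∧
    Tendsto xs atTop (𝓝 x) ∧ Tendsto vs atTop (𝓝 v)}

/-- Contingent cone to `Ω` at `x`. -/
def contingentCone {n : ℕ} (x : EuclideanSpace ℝ (Fin n))
    (Ω : Set (EuclideanSpace ℝ (Fin n))) : Set (EuclideanSpace ℝ (Fin n)) :=
  {d | ∃ (xs : ℕ → EuclideanSpace ℝ (Fin n)) (ts : ℕ → ℝ),
    (∀ k, xs k ∈ Ω) ∧ (∀ k, 0 < ts k) ∧ Tendsto ts atTop (𝓝 0) ∧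
    Tendsto (fun k => (ts k)⁻¹ • (xs k - x)) atTop (𝓝 d)}

variable {n : ℕ}

/-- L2: quadratic lower support implies Fréchet subgradient. -/
lemma mem_frechet_of_quadratic {f : EuclideanSpace ℝ (Fin n) → ℝ}
    {z v : EuclideanSpace ℝ (Fin n)} {lam r : ℝ} (hr : 0 < r) (hlam : 0 ≤ lam)
    (h : ∀ y ∈ Metric.ball z r, f z + (inner ℝ v (y - z) : ℝ) - lam * ‖y - z‖ ^ 2 ≤ f y) :
    v ∈ frechetSubdiff f z := by
  intro ε hε
  have hδ : (0:ℝ) < min r (ε / (lam + 1)) := lt_min hr (by positivity)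
  filter_upwards [Metric.ball_mem_nhds z hδ] with y hy
  have hy' : y ∈ Metric.ball z r := Metric.ball_subset_ball (min_le_left _ _) hy
  have h1 := h y hy'
  have h2 : ‖y - z‖ < ε / (lam + 1) := by
    have := hy
    rw [Metric.mem_ball, dist_eq_norm] at this
    exact lt_of_lt_of_le this (min_le_right _ _)
  have h3 : (0:ℝ) ≤ ‖y - z‖ := norm_nonneg _
  have h4 : lam * ‖y - z‖ ≤ ε := by
    rw [lt_div_iff₀ (by positivity : (0:ℝ) < lam + 1)] at h2
    nlinarith
  nlinarith [mul_le_mul_of_nonneg_right h4 h3]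

/-- L1: Fréchet subgradients of a Lipschitz function are norm-bounded. -/
lemma norm_frechet_le {f : EuclideanSpace ℝ (Fin n) → ℝ} {K : NNReal} {c : EuclideanSpace ℝ (Fin n)}
    {eb : ℝ} (hL : LipschitzOnWith K f (Metric.ball c eb))
    {z v : EuclideanSpace ℝ (Fin n)} (hz : z ∈ Metric.ball c eb)
    (hv : v ∈ frechetSubdiff f z) : ‖v‖ ≤ K := by
  by_contra hlt
  push_neg at hlt
  set ε := (‖v‖ - K) / 2 with hεdef
  have hε : 0 < ε := by
    have : (0:ℝ) ≤ K := K.coe_nonneg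
    simp only [hεdef]; linarith
  obtain ⟨r, hr, hball⟩ := Metric.eventually_nhds_iff.mp (hv ε hε)
  have hzc : dist z c < eb := Metric.mem_ball.mp hz
  have hvpos : (0:ℝ) < ‖v‖ := lt_of_le_of_lt K.coe_nonneg hlt
  set t := min r (eb - dist z c) / (2 * (‖v‖ + 1)) with htdef
  have ht : 0 < t := by
    apply div_pos (lt_min hr (by linarith)) (by positivity)
  set y := z + t • v with hydef
  have hyz : dist y z = t * ‖v‖ := by
    rw [hydef, dist_eq_norm, add_sub_cancel_left, norm_smul, Real.norm_eq_abs, abs_of_pos ht]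
  have htv : t * ‖v‖ < min r (eb - dist z c) := by
    have h1 : t * ‖v‖ < t * (2 * (‖v‖ + 1)) := by nlinarith
    calc t * ‖v‖ < t * (2 * (‖v‖ + 1)) := h1
      _ = min r (eb - dist z c) := by rw [htdef, div_mul_cancel₀]; positivity
  have hyr : dist y z < r := lt_of_lt_of_le (hyz ▸ htv) (min_le_left _ _)
  have hyc : y ∈ Metric.ball c eb := by
    rw [Metric.mem_ball]
    calc dist y c ≤ dist y z + dist z c := dist_triangle _ _ _
      _ < (eb - dist z c) + dist z c := by
          have := lt_of_lt_of_le (hyz ▸ htv) (min_le_right _ _); linarith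
      _ = eb := by ring
  have hineq := hball hyr
  have hinner : (inner ℝ v (y - z) : ℝ) = t * ‖v‖ ^ 2 := by
    rw [hydef, add_sub_cancel_left, real_inner_smul_right, real_inner_self_eq_norm_sq]
  have hlip : f y - f z ≤ K * (t * ‖v‖) := by
    have := hL.dist_le_mul y hyc z hz
    rw [hyz] at this
    have h2 : |f y - f z| ≤ K * (t * ‖v‖) := by rwa [Real.dist_eq] at this
    exact (abs_le.mp h2).2
  have hyznorm : ‖y - z‖ = t * ‖v‖ := by rw [← dist_eq_norm, hyz]
  rw [hyznorm, hinner] at hineq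
  -- hineq : -ε * (t * ‖v‖) ≤ f y - f z - t * ‖v‖^2
  have : t * ‖v‖ ^ 2 - ε * (t * ‖v‖) ≤ K * (t * ‖v‖) := by linarith
  have hKε : ‖v‖ ≤ K + ε := by
    have htvpos : 0 < t * ‖v‖ := mul_pos ht hvpos
    nlinarith
  simp only [hεdef] at hKε; linarith

/-- L4: fuzzy mean value inequality for Lipschitz functions. -/
lemma fuzzy_mvt {f : EuclideanSpace ℝ (Fin n) → ℝ} {K : NNReal} {c : EuclideanSpace ℝ (Fin n)}
    {eb : ℝ} (heb : 0 < eb) (hL : LipschitzOnWith K f (Metric.ball c eb))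
    {b : EuclideanSpace ℝ (Fin n)} (hb : ‖b - c‖ < eb / 4) (hbc : b ≠ c)
    {η σ : ℝ} (hη : 0 < η) (hσ : 0 < σ) :
    ∃ z v, v ∈ frechetSubdiff f z ∧ ‖v‖ ≤ K ∧ ‖z - c‖ ≤ ‖b - c‖ + σ ∧
      f b - f c - η ≤ (inner ℝ v (b - c) : ℝ) := by
  set D : EuclideanSpace ℝ (Fin n) := b - c with hD
  have hRpos : 0 < ‖D‖ := by rw [norm_pos_iff, hD]; exact sub_ne_zero_of_ne hbc
  set R := ‖D‖ with hRdef
  clear_value D R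
  have hR : 0 < R := hRpos
  have hRne : R ≠ 0 := ne_of_gt hR
  set ρ := eb / 2 with hρdef
  clear_value ρ
  have hρ : 0 < ρ := by rw [hρdef]; positivity
  set w : EuclideanSpace ℝ (Fin n) := (-((f b - f c - η / 2) / R ^ 2)) • D with hw
  clear_value w
  have hwD : (inner ℝ w D : ℝ) = -(f b - f c - η / 2) := by
    rw [hw, real_inner_smul_left, real_inner_self_eq_norm_sq, ← hRdef]
    field_simp
  set h : EuclideanSpace ℝ (Fin n) → ℝ := fun x => f x + (inner ℝ w x : ℝ) with hh
  clear_value h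
  set L : ℝ := K + ‖w‖ + 1 with hLdef
  clear_value L
  have hLpos : 0 < L := by have := K.coe_nonneg; have := norm_nonneg w; rw [hLdef]; linarith
  have hhlip : ∀ x ∈ Metric.ball c eb, ∀ y ∈ Metric.ball c eb, h x - h y ≤ L * ‖x - y‖ := by
    intro x hx y hy
    have h1 : f x - f y ≤ K * ‖x - y‖ := by
      have := hL.dist_le_mul x hx y hy
      rw [Real.dist_eq, dist_eq_norm] at this
      exact le_trans (le_abs_self _) this
    have h2 : (inner ℝ w x : ℝ) - inner ℝ w y ≤ ‖w‖ * ‖x - y‖ := by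
      rw [← inner_sub_right]
      exact real_inner_le_norm w (x - y)
    have h3 : 0 ≤ ‖x - y‖ := norm_nonneg _
    simp only [hh]
    rw [hLdef]; nlinarith
  set S : Set (EuclideanSpace ℝ (Fin n)) := (fun t : ℝ => c + t • D) '' Set.Icc 0 1 with hS
  clear_value S
  have hcS : c ∈ S := by
    rw [hS]; exact ⟨0, Set.mem_Icc.mpr ⟨le_rfl, zero_le_one⟩, by simp⟩
  have hSne : S.Nonempty := ⟨c, hcS⟩
  set G : EuclideanSpace ℝ (Fin n) → ℝ := fun x => (Metric.infDist x S) ^ 2 with hG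
  clear_value G
  have hGcont : Continuous G := by rw [hG]; exact (Metric.continuous_infDist_pt S).pow 2
  have hGnonneg : ∀ x, 0 ≤ G x := by intro x; simp only [hG]; positivity
  set θ : ℝ := min σ (min (ρ / 4) (η / (2 * L))) with hθdef
  clear_value θ
  have hθ : 0 < θ := by
    rw [hθdef]; exact lt_min hσ (lt_min (by positivity) (by positivity))
  have hθσ : θ ≤ σ := by rw [hθdef]; exact min_le_left _ _
  have hθρ : θ ≤ ρ / 4 := by rw [hθdef]; exact le_trans (min_le_right _ _) (min_le_left _ _)
  have hθη : θ ≤ η / (2 * L) := by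
    rw [hθdef]; exact le_trans (min_le_right _ _) (min_le_right _ _)
  set M : ℝ := L * ρ + 1 with hM
  clear_value M
  have hMpos : 0 < M := by rw [hM]; positivity
  set lam : ℝ := M / θ ^ 2 with hlam
  clear_value lam
  have hlampos : 0 < lam := by rw [hlam]; exact div_pos hMpos (pow_pos hθ 2)
  have hlamθ : lam * θ ^ 2 = M := by rw [hlam]; field_simp
  set φ : EuclideanSpace ℝ (Fin n) → ℝ := fun x => h x + lam * G x with hφ
  clear_value φ
  have hRρ : R < ρ / 2 := by rw [hρdef]; linarith
  have hsub : Metric.closedBall c ρ ⊆ Metric.ball c eb :=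
    Metric.closedBall_subset_ball (by rw [hρdef]; linarith)
  have hφcont : ContinuousOn φ (Metric.closedBall c ρ) := by
    rw [hφ, hh]
    apply ContinuousOn.add
    apply ContinuousOn.add
    · exact (hL.continuousOn).mono hsub
    · exact (Continuous.inner continuous_const continuous_id).continuousOn
    · exact (continuous_const.mul hGcont).continuousOn
  obtain ⟨z, hzC, hzmin⟩ := (isCompact_closedBall c ρ).exists_isMinOn
    ⟨c, Metric.mem_closedBall_self hρ.le⟩ hφcont
  have hzball : z ∈ Metric.ball c eb := hsub hzC
  have hφzc : φ z ≤ h c := by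
    have h0 := hzmin (Metric.mem_closedBall_self hρ.le)
    have h1 : φ c = h c := by
      simp only [hφ, hG]
      rw [Metric.infDist_zero_of_mem hcS]
      ring
    calc φ z ≤ φ c := h0
      _ = h c := h1
  set α : ℝ := (inner ℝ (z - c) D : ℝ) / R ^ 2 with hα
  clear_value α
  set cc : ℝ := max 0 (min α 1) with hcc
  clear_value cc
  have hcc0 : 0 ≤ cc := by rw [hcc]; exact le_max_left _ _
  have hcc1 : cc ≤ 1 := by rw [hcc]; exact max_le zero_le_one (min_le_right _ _)
  set P : EuclideanSpace ℝ (Fin n) := c + cc • D with hP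
  clear_value P
  have hPS : P ∈ S := by
    rw [hS, hP]; exact ⟨cc, Set.mem_Icc.mpr ⟨hcc0, hcc1⟩, rfl⟩
  have hzca : (inner ℝ (z - c) D : ℝ) = α * R ^ 2 := by rw [hα]; field_simp
  have hq : ∀ t : ℝ, ‖z - (c + t • D)‖ ^ 2
      = ‖z - c‖ ^ 2 - 2 * t * (α * R ^ 2) + t ^ 2 * R ^ 2 := by
    intro t
    have he : z - (c + t • D) = (z - c) - t • D := by abel
    rw [he, norm_sub_sq_real, real_inner_smul_right, hzca, norm_smul, Real.norm_eq_abs,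
      ← hRdef, mul_pow, sq_abs]
    ring
  have hproj : ∀ t : ℝ, 0 ≤ t → t ≤ 1 → (cc - α) ^ 2 ≤ (t - α) ^ 2 := by
    intro t ht0 ht1
    rcases le_total α 0 with hA | hA
    · have hc0 : cc = 0 := by
        rw [hcc, min_eq_left (le_trans hA zero_le_one), max_eq_left hA]
      rw [hc0]; nlinarith
    rcases le_total 1 α with hB | hB
    · have hc1 : cc = 1 := by rw [hcc, min_eq_right hB, max_eq_right zero_le_one]
      rw [hc1]; nlinarith
    · have hcα : cc = α := by rw [hcc, min_eq_left hB, max_eq_right hA]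
      rw [hcα]; nlinarith
  have hnear : Metric.infDist z S = ‖z - P‖ := by
    apply le_antisymm
    · rw [← dist_eq_norm]; exact Metric.infDist_le_dist_of_mem hPS
    · haveI : Nonempty ↥S := hSne.to_subtype
      rw [Metric.infDist_eq_iInf]
      apply le_ciInf
      rintro ⟨s, hs⟩
      rw [hS] at hs
      obtain ⟨t, ht, rfl⟩ := hs
      simp only [dist_eq_norm]
      have h1 : ‖z - P‖ ^ 2 ≤ ‖z - (c + t • D)‖ ^ 2 := by
        rw [hq t, hP, hq cc]
        have := hproj t ht.1 ht.2
        nlinarith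
      nlinarith [norm_nonneg (z - P), norm_nonneg (z - (c + t • D))]
  have hzPsmall : ‖z - P‖ < θ := by
    have h1 : lam * G z ≤ h c - h z := by
      have h0 := hφzc; simp only [hφ] at h0; linarith
    have h2 : h c - h z ≤ L * ρ := by
      have h3 := hhlip c (Metric.mem_ball_self heb) z hzball
      have h4 : ‖c - z‖ ≤ ρ := by
        rw [norm_sub_rev, ← dist_eq_norm]; exact Metric.mem_closedBall.mp hzC
      nlinarith
    have h5 : lam * G z < M := lt_of_le_of_lt (le_trans h1 h2) (by rw [hM]; linarith)
    have h6 : G z < θ ^ 2 := by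
      rw [← hlamθ] at h5
      exact lt_of_mul_lt_mul_left h5 hlampos.le
    simp only [hG] at h6
    rw [hnear] at h6
    nlinarith [norm_nonneg (z - P)]
  have hPc : ‖P - c‖ ≤ R := by
    rw [hP, add_sub_cancel_left, norm_smul, Real.norm_eq_abs, abs_of_nonneg hcc0, ← hRdef]
    nlinarith
  have hzc3 : ‖z - c‖ < θ + R := by
    calc ‖z - c‖ = ‖(z - P) + (P - c)‖ := by abel_nf
      _ ≤ ‖z - P‖ + ‖P - c‖ := norm_add_le _ _
      _ < θ + R := by linarith
  have hzint : ‖z - c‖ < 3 * ρ / 4 := by linarith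
  have hlocmin : ∀ y ∈ Metric.ball z (ρ / 4), φ z ≤ φ y := by
    intro y hy
    apply hzmin
    rw [Metric.mem_closedBall]
    have h1 : dist y z < ρ / 4 := Metric.mem_ball.mp hy
    have h2 : dist z c < 3 * ρ / 4 := by rwa [dist_eq_norm]
    calc dist y c ≤ dist y z + dist z c := dist_triangle _ _ _
      _ ≤ ρ := by linarith
  set v : EuclideanSpace ℝ (Fin n) := -w - (2 * lam) • (z - P) with hv
  clear_value v
  have hGzeq : G z = ‖z - P‖ ^ 2 := by simp only [hG]; rw [hnear]
  have hsupport : ∀ y ∈ Metric.ball z (ρ / 4),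
      f z + (inner ℝ v (y - z) : ℝ) - lam * ‖y - z‖ ^ 2 ≤ f y := by
    intro y hy
    have h1 := hlocmin y hy
    simp only [hφ] at h1
    have h2 : G y ≤ ‖y - P‖ ^ 2 := by
      simp only [hG]
      have h3 : Metric.infDist y S ≤ ‖y - P‖ := by
        rw [← dist_eq_norm]; exact Metric.infDist_le_dist_of_mem hPS
      have := Metric.infDist_nonneg (x := y) (s := S)
      nlinarith
    have h4 : ‖y - P‖ ^ 2 = ‖y - z‖ ^ 2 + 2 * (inner ℝ (y - z) (z - P) : ℝ) + ‖z - P‖ ^ 2 := by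
      have he : y - P = (y - z) + (z - P) := by abel
      rw [he, norm_add_sq_real]
    have h5 : (inner ℝ v (y - z) : ℝ) =
        -(inner ℝ w (y - z) : ℝ) - 2 * lam * (inner ℝ (y - z) (z - P) : ℝ) := by
      rw [hv, sub_eq_add_neg, inner_add_left, inner_neg_left, inner_neg_left,
        real_inner_smul_left, real_inner_comm (z - P)]
      ring
    have h7 : h y - h z = f y - f z + (inner ℝ w (y - z) : ℝ) := by
      simp only [hh]; rw [inner_sub_right]; ring
    have h8 : lam * ‖y - P‖ ^ 2
        = lam * ‖y - z‖ ^ 2 + 2 * lam * (inner ℝ (y - z) (z - P) : ℝ) + lam * ‖z - P‖ ^ 2 := by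
      rw [h4]; ring
    have h9 := mul_le_mul_of_nonneg_left h2 hlampos.le
    have h10 : lam * G z = lam * ‖z - P‖ ^ 2 := by rw [hGzeq]
    linarith
  have hvF : v ∈ frechetSubdiff f z :=
    mem_frechet_of_quadratic (by positivity) hlampos.le hsupport
  have hvK : ‖v‖ ≤ K := norm_frechet_le hL hzball hvF
  have hbound : ‖z - c‖ ≤ R + σ := by linarith
  refine ⟨z, v, hvF, hvK, hbound, ?_⟩
  have hgoal : f b - f c - η ≤ (inner ℝ v D : ℝ) := by
    have hzPD : (inner ℝ (z - P) D : ℝ) = (α - cc) * R ^ 2 := by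
      have he : z - P = (z - c) - cc • D := by rw [hP]; abel
      rw [he, inner_sub_left, real_inner_smul_left, hzca, real_inner_self_eq_norm_sq, ← hRdef]
      ring
    have hvD : (inner ℝ v D : ℝ) = (f b - f c - η / 2) - 2 * lam * ((α - cc) * R ^ 2) := by
      rw [hv, sub_eq_add_neg, inner_add_left, inner_neg_left, inner_neg_left,
        real_inner_smul_left, hzPD, hwD]
      ring
    rcases lt_or_eq_of_le hcc1 with hcclt | hcceq
    · have hα1 : α ≤ 1 := by
        by_contra hcon
        push_neg at hcon
        have : cc = 1 := by rw [hcc, min_eq_right hcon.le, max_eq_right zero_le_one]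
        linarith
      have hαcc : α ≤ cc := by
        rw [hcc, min_eq_left hα1]; exact le_max_right _ _
      have hneg : (α - cc) * R ^ 2 ≤ 0 := by nlinarith
      rw [hvD]; nlinarith
    · exfalso
      have hPb : P = b := by
        rw [hP, hcceq, hD]; simp
      have hbball : b ∈ Metric.ball c eb := by
        rw [Metric.mem_ball, dist_eq_norm, ← hD, ← hRdef]; linarith
      have h1 : h b - h z ≤ L * ‖b - z‖ := hhlip b hbball z hzball
      have h2 : ‖b - z‖ < θ := by rw [norm_sub_rev, ← hPb]; exact hzPsmall
      have h3 : L * ‖b - z‖ < η / 2 := by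
        have h4 : L * ‖b - z‖ < L * θ := mul_lt_mul_of_pos_left h2 hLpos
        have h5 : L * θ ≤ η / 2 := by
          calc L * θ ≤ L * (η / (2 * L)) := mul_le_mul_of_nonneg_left hθη hLpos.le
            _ = η / 2 := by field_simp
        linarith
      have h6 : h b - h c = η / 2 := by
        simp only [hh]
        have h7 : (inner ℝ w b : ℝ) - inner ℝ w c = inner ℝ w (b - c) := by rw [inner_sub_right]
        have h8 : (inner ℝ w (b - c) : ℝ) = -(f b - f c - η / 2) := by rw [← hD]; exact hwD
        linarith
      have h8 : 0 ≤ lam * G z := mul_nonneg hlampos.le (hGnonneg z)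
      have h9 : φ z = h z + lam * G z := by rw [hφ]
      linarith
  exact hgoal


/-- L3: the limiting subdifferential of a locally Lipschitz function is nonempty. -/
lemma limiting_nonempty {f : EuclideanSpace ℝ (Fin n) → ℝ} {K : NNReal}
    {c : EuclideanSpace ℝ (Fin n)} {eb : ℝ} (heb : 0 < eb)
    (hL : LipschitzOnWith K f (Metric.ball c eb)) :
    (limitingSubdiff f c).Nonempty := by
  set ρ := eb / 2 with hρdef
  have hρ : 0 < ρ := by rw [hρdef]; positivity
  have hsub : Metric.closedBall c ρ ⊆ Metric.ball c eb :=
    Metric.closedBall_subset_ball (by rw [hρdef]; linarith)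
  have key : ∀ m : ℕ, ∃ z v, v ∈ frechetSubdiff f z ∧ ‖v‖ ≤ K ∧
      ‖z - c‖ ≤ ρ / ((m : ℝ) + 1) := by
    intro m
    set lam : ℝ := ((K : ℝ) + 1) * ((m : ℝ) + 1) / ρ with hlam
    have hlampos : 0 < lam := by rw [hlam]; positivity
    have hψcont : ContinuousOn (fun x => f x + lam * ‖x - c‖ ^ 2) (Metric.closedBall c ρ) := by
      apply ContinuousOn.add
      · exact (hL.continuousOn).mono hsub
      · exact (continuous_const.mul ((continuous_id.sub continuous_const).norm.pow 2)).continuousOn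
    obtain ⟨z, hzC, hzmin⟩ := (isCompact_closedBall c ρ).exists_isMinOn
      ⟨c, Metric.mem_closedBall_self hρ.le⟩ hψcont
    have hzball : z ∈ Metric.ball c eb := hsub hzC
    have h1 : f z + lam * ‖z - c‖ ^ 2 ≤ f c := by
      have := hzmin (Metric.mem_closedBall_self hρ.le)
      simpa using this
    have h2 : f c - f z ≤ K * ‖z - c‖ := by
      have := hL.dist_le_mul c (Metric.mem_ball_self heb) z hzball
      rw [Real.dist_eq, dist_eq_norm, norm_sub_rev] at this
      exact le_trans (le_abs_self _) this
    have h3 : lam * ‖z - c‖ ^ 2 ≤ K * ‖z - c‖ := by linarith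
    have h4 : ‖z - c‖ ≤ (K : ℝ) / lam := by
      rcases eq_or_lt_of_le (norm_nonneg (z - c)) with h | h
      · rw [← h]; positivity
      · rw [le_div_iff₀ hlampos]
        nlinarith
    have h5 : (K : ℝ) / lam ≤ ρ / ((m : ℝ) + 1) := by
      rw [hlam]
      rw [div_div_eq_mul_div, div_le_div_iff₀ (by positivity) (by positivity)]
      have h6 : (0:ℝ) ≤ (m : ℝ) + 1 := by positivity
      nlinarith [K.coe_nonneg, mul_nonneg hρ.le h6, hρ.le]
    have h7 : ‖z - c‖ < ρ := by
      have h8 : (K : ℝ) / lam < ρ := by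
        rw [hlam, div_div_eq_mul_div, div_lt_iff₀ (by positivity)]
        have h6 : (0:ℝ) ≤ (m : ℝ) := Nat.cast_nonneg m
        nlinarith [K.coe_nonneg, mul_nonneg hρ.le h6, hρ]
      linarith
    set v : EuclideanSpace ℝ (Fin n) := -(2 * lam) • (z - c) with hv
    have hsupport : ∀ y ∈ Metric.ball z (ρ - ‖z - c‖),
        f z + (inner ℝ v (y - z) : ℝ) - lam * ‖y - z‖ ^ 2 ≤ f y := by
      intro y hy
      have hyC : y ∈ Metric.closedBall c ρ := by
        rw [Metric.mem_closedBall]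
        have hd1 : dist y z < ρ - ‖z - c‖ := Metric.mem_ball.mp hy
        have hd3 : dist z c = ‖z - c‖ := dist_eq_norm _ _
        calc dist y c ≤ dist y z + dist z c := dist_triangle _ _ _
          _ ≤ ρ := by rw [hd3]; linarith
      have h1 : f z + lam * ‖z - c‖ ^ 2 ≤ f y + lam * ‖y - c‖ ^ 2 := hzmin hyC
      have h4 : ‖y - c‖ ^ 2 = ‖y - z‖ ^ 2 + 2 * (inner ℝ (y - z) (z - c) : ℝ) + ‖z - c‖ ^ 2 := by
        have he : y - c = (y - z) + (z - c) := by abel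
        rw [he, norm_add_sq_real]
      have h5 : (inner ℝ v (y - z) : ℝ) = -(2 * lam) * (inner ℝ (y - z) (z - c) : ℝ) := by
        rw [hv, real_inner_smul_left, real_inner_comm]
      rw [h5]
      have h4' : lam * ‖y - c‖ ^ 2
          = lam * ‖y - z‖ ^ 2 + 2 * lam * (inner ℝ (y - z) (z - c) : ℝ) + lam * ‖z - c‖ ^ 2 := by
        rw [h4]; ring
      linarith
    have hvF : v ∈ frechetSubdiff f z :=
      mem_frechet_of_quadratic (by linarith) hlampos.le hsupport
    exact ⟨z, v, hvF, norm_frechet_le hL hzball hvF, le_trans h4 h5⟩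
  choose zs vs h1 h2 h3 using key
  have hzt : Tendsto zs atTop (𝓝 c) := by
    rw [tendsto_iff_dist_tendsto_zero]
    have h6 : Tendsto (fun m : ℕ => ((m : ℝ) + 1)⁻¹) atTop (𝓝 0) :=
      tendsto_inv_atTop_zero.comp
        (tendsto_atTop_add_const_right atTop 1 tendsto_natCast_atTop_atTop)
    have h8 : Tendsto (fun m : ℕ => ρ / ((m : ℝ) + 1)) atTop (𝓝 0) := by
      simpa [div_eq_mul_inv] using h6.const_mul ρ
    exact squeeze_zero (fun m => dist_nonneg)
      (fun m => le_trans (le_of_eq (dist_eq_norm _ _)) (h3 m)) h8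
  have hmem : ∀ m, vs m ∈ Metric.closedBall (0 : EuclideanSpace ℝ (Fin n)) K := by
    intro m; rw [Metric.mem_closedBall, dist_zero_right]; exact h2 m
  obtain ⟨v, _, ψ, hψ, hconv⟩ := (isCompact_closedBall (0 : EuclideanSpace ℝ (Fin n)) K).tendsto_subseq hmem
  exact ⟨v, zs ∘ ψ, vs ∘ ψ, fun k => h1 (ψ k), hzt.comp hψ.tendsto_atTop, hconv⟩


/-- Necessary condition for a local highly robust weakly efficient
solution in `ℝⁿ` via the Mordukhovich subdifferential. -/
theorem necessary_condition_limiting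
    {n p : ℕ} (Ω : Set (EuclideanSpace ℝ (Fin n)))
    (f : Fin p → EuclideanSpace ℝ (Fin n) → ℝ)
    (U : Fin p → Set (EuclideanSpace ℝ (Fin n)))
    (xb : EuclideanSpace ℝ (Fin n)) (hxb : xb ∈ Ω)
    (hf : ∀ i, ∃ K : NNReal, ∃ ε > (0 : ℝ),
      LipschitzOnWith K (f i) (Metric.ball xb ε))
    (hrob : ∃ δ > (0 : ℝ), ∀ u : Fin p → EuclideanSpace ℝ (Fin n),
      (∀ i, u i ∈ U i) →
      ¬ ∃ x ∈ Ω ∩ Metric.ball xb δ,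
        ∀ i, f i x - (inner ℝ (u i) x : ℝ) < f i xb - (inner ℝ (u i) xb : ℝ)) :
    ¬ ∃ d ∈ contingentCone xb Ω, ∃ u : Fin p → EuclideanSpace ℝ (Fin n),
      (∀ i, u i ∈ U i) ∧
      ∀ i, ∀ v ∈ limitingSubdiff (f i) xb, (inner ℝ (v - u i) d : ℝ) < 0 := by
  obtain ⟨δ, hδ, hR⟩ := hrob
  rintro ⟨d, ⟨xs, ts, hxsΩ, hts, hts0, hq⟩, u, huU, hcrit⟩
  -- xs tends to xb
  have hxs : Tendsto xs atTop (𝓝 xb) := by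
    rw [← tendsto_sub_nhds_zero_iff]
    have he : (fun k => xs k - xb) = fun k => ts k • ((ts k)⁻¹ • (xs k - xb)) := by
      funext k
      rw [smul_inv_smul₀ (hts k).ne']
    rw [he]
    have h0 := hts0.smul hq
    simpa using h0
  rcases Nat.eq_zero_or_pos p with hp | hp
  · -- p = 0 : robustness is itself contradictory
    subst hp
    exact hR u huU ⟨xb, ⟨hxb, Metric.mem_ball_self hδ⟩, fun i => i.elim0⟩
  by_cases hd : d = 0
  · -- d = 0 : use nonemptiness of the limiting subdifferential
    set i0 : Fin p := ⟨0, hp⟩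
    obtain ⟨K, eb, heb, hLip⟩ := hf i0
    obtain ⟨v, hv⟩ := limiting_nonempty heb hLip
    have := hcrit i0 v hv
    rw [hd] at this
    simp at this
  -- main case : d ≠ 0
  have claim : ∀ i, ∀ᶠ k in atTop, f i (xs k) - f i xb < (inner ℝ (u i) (xs k - xb) : ℝ) := by
    intro i
    by_contra hcon
    rw [Filter.not_eventually] at hcon
    obtain ⟨φ₀, hφ₀, hbad⟩ := extraction_of_frequently_atTop hcon
    simp only [not_lt] at hbad
    obtain ⟨K, eb, heb, hLip⟩ := hf i
    -- sequences along the subsequence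
    have hXt : Tendsto (fun k => xs (φ₀ k)) atTop (𝓝 xb) := hxs.comp hφ₀.tendsto_atTop
    have hTt : Tendsto (fun k => ts (φ₀ k)) atTop (𝓝 0) := hts0.comp hφ₀.tendsto_atTop
    have hQt : Tendsto (fun k => (ts (φ₀ k))⁻¹ • (xs (φ₀ k) - xb)) atTop (𝓝 d) :=
      hq.comp hφ₀.tendsto_atTop
    -- eventually the points are close and distinct from xb
    have hev1 : ∀ᶠ k in atTop, ‖xs (φ₀ k) - xb‖ < eb / 4 := by
      have h1 := hXt (Metric.ball_mem_nhds xb (by positivity : (0:ℝ) < eb / 4))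
      filter_upwards [h1] with k hk
      simp only [Set.mem_preimage, Metric.mem_ball, dist_eq_norm] at hk
      exact hk
    have hev2 : ∀ᶠ k in atTop, xs (φ₀ k) ≠ xb := by
      have hnd : 0 < ‖d‖ := norm_pos_iff.mpr hd
      have h1 := (hQt.norm) (Metric.ball_mem_nhds ‖d‖ (by positivity : (0:ℝ) < ‖d‖ / 2))
      filter_upwards [h1] with k hk
      intro hcontra
      simp only [Set.mem_preimage, Metric.mem_ball, Real.dist_eq] at hk
      rw [hcontra] at hk
      simp only [sub_self, smul_zero, norm_zero, zero_sub, abs_neg,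
        abs_of_nonneg (le_of_lt hnd)] at hk
      linarith
    obtain ⟨N, hN⟩ := (hev1.and hev2).exists_forall_of_atTop
    have key : ∀ k, ∃ z v, v ∈ frechetSubdiff (f i) z ∧ ‖v‖ ≤ (K : ℝ) ∧
        ‖z - xb‖ ≤ ‖xs (φ₀ (k + N)) - xb‖ + ts (φ₀ (k + N)) ∧
        f i (xs (φ₀ (k + N))) - f i xb - (ts (φ₀ (k + N))) ^ 2
          ≤ (inner ℝ v (xs (φ₀ (k + N)) - xb) : ℝ) := by
      intro k
      obtain ⟨hc1, hc2⟩ := hN (k + N) (Nat.le_add_left N k)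
      exact fuzzy_mvt heb hLip hc1 hc2 (pow_pos (hts _) 2) (hts _)
    choose zs vs hz1 hz2 hz3 hz4 using key
    have hmono : Tendsto (fun k => φ₀ (k + N)) atTop atTop :=
      (hφ₀.tendsto_atTop).comp (tendsto_add_atTop_nat N)
    have hTm : Tendsto (fun k => ts (φ₀ (k + N))) atTop (𝓝 0) := hts0.comp hmono
    have hXm : Tendsto (fun k => xs (φ₀ (k + N))) atTop (𝓝 xb) := hxs.comp hmono
    have hQm : Tendsto (fun k => (ts (φ₀ (k + N)))⁻¹ • (xs (φ₀ (k + N)) - xb)) atTop (𝓝 d) :=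
      hq.comp hmono
    have hzt : Tendsto zs atTop (𝓝 xb) := by
      have hrhs : Tendsto (fun k => ‖xs (φ₀ (k + N)) - xb‖ + ts (φ₀ (k + N))) atTop (𝓝 0) := by
        have h1 : Tendsto (fun k => ‖xs (φ₀ (k + N)) - xb‖) atTop (𝓝 0) := by
          have := (tendsto_sub_nhds_zero_iff.mpr hXm).norm
          simpa using this
        simpa using h1.add hTm
      rw [tendsto_iff_dist_tendsto_zero]
      exact squeeze_zero (fun _ => dist_nonneg)
        (fun k => le_trans (le_of_eq (dist_eq_norm _ _)) (hz3 k)) hrhs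
    have hmem : ∀ k, vs k ∈ Metric.closedBall (0 : EuclideanSpace ℝ (Fin n)) K := by
      intro k; rw [Metric.mem_closedBall, dist_zero_right]; exact hz2 k
    obtain ⟨v, _, ψ, hψ, hconv⟩ :=
      (isCompact_closedBall (0 : EuclideanSpace ℝ (Fin n)) K).tendsto_subseq hmem
    have hvL : v ∈ limitingSubdiff (f i) xb :=
      ⟨zs ∘ ψ, vs ∘ ψ, fun k => hz1 (ψ k), hzt.comp hψ.tendsto_atTop, hconv⟩
    have hineq : ∀ k, (inner ℝ (u i) ((ts (φ₀ (k + N)))⁻¹ • (xs (φ₀ (k + N)) - xb)) : ℝ)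
        - ts (φ₀ (k + N))
        ≤ (inner ℝ (vs k) ((ts (φ₀ (k + N)))⁻¹ • (xs (φ₀ (k + N)) - xb)) : ℝ) := by
      intro k
      have hb := hbad (k + N)
      have h4 := hz4 k
      have hT := hts (φ₀ (k + N))
      rw [real_inner_smul_right, real_inner_smul_right]
      have hTinv : (0:ℝ) ≤ (ts (φ₀ (k + N)))⁻¹ := (inv_pos.mpr hT).le
      have h5 : (inner ℝ (u i) (xs (φ₀ (k + N)) - xb) : ℝ) - ts (φ₀ (k + N)) ^ 2
          ≤ (inner ℝ (vs k) (xs (φ₀ (k + N)) - xb) : ℝ) := by linarith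
      have h6 := mul_le_mul_of_nonneg_left h5 hTinv
      have h7 : (ts (φ₀ (k + N)))⁻¹ * (ts (φ₀ (k + N))) ^ 2 = ts (φ₀ (k + N)) := by
        field_simp
      have h8 : (ts (φ₀ (k + N)))⁻¹
            * ((inner ℝ (u i) (xs (φ₀ (k + N)) - xb) : ℝ) - ts (φ₀ (k + N)) ^ 2)
          = (ts (φ₀ (k + N)))⁻¹ * (inner ℝ (u i) (xs (φ₀ (k + N)) - xb) : ℝ)
            - ts (φ₀ (k + N)) := by
        rw [mul_sub, h7]
      linarith
    have hL1 : Tendsto (fun k => (inner ℝ (u i)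
          ((ts (φ₀ (ψ k + N)))⁻¹ • (xs (φ₀ (ψ k + N)) - xb)) : ℝ) - ts (φ₀ (ψ k + N)))
        atTop (𝓝 ((inner ℝ (u i) d : ℝ) - 0)) :=
      (Tendsto.inner tendsto_const_nhds
        (hQm.comp hψ.tendsto_atTop)).sub (hTm.comp hψ.tendsto_atTop)
    have hL2 : Tendsto (fun k => (inner ℝ (vs (ψ k))
          ((ts (φ₀ (ψ k + N)))⁻¹ • (xs (φ₀ (ψ k + N)) - xb)) : ℝ))
        atTop (𝓝 (inner ℝ v d : ℝ)) :=
      Tendsto.inner hconv (hQm.comp hψ.tendsto_atTop)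
    have hfin : (inner ℝ (u i) d : ℝ) - 0 ≤ (inner ℝ v d : ℝ) :=
      le_of_tendsto_of_tendsto' hL1 hL2 (fun k => hineq (ψ k))
    have hc := hcrit i v hvL
    rw [inner_sub_left] at hc
    linarith
  have hall := eventually_all.mpr claim
  have hball : ∀ᶠ k in atTop, xs k ∈ Metric.ball xb δ :=
    hxs.eventually_mem (Metric.ball_mem_nhds xb hδ)
  obtain ⟨k, hk1, hk2⟩ := (hall.and hball).exists
  refine hR u huU ⟨xs k, ⟨hxsΩ k, hk2⟩, fun i => ?_⟩
  have h1 := hk1 i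
  rw [inner_sub_right] at h1
  linarith
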